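/- Every univariate real polynomial that is strictly positive on all of ℝ is a sum of two squares of real polynomials. -/

import Mathlib

open Polynomial

private lemma sos_aux : ∀ n : ℕ, ∀ p : Polynomial ℝ, p.natDegree ≤ n →
    (∀ α : ℝ, 0 < p.eval α) → ∃ q r : Polynomial ℝ, p = q^2 + r^2 := by
  intro n
  induction n using Nat.strong_induction_on with
  | _ n ih =>
    intro p hdeg hp
    by_cases h0 : p.natDegree = 0
    · -- constant case
      obtain ⟨c, rfl⟩ := Polynomial.natDegree_eq_zero.mp h0
      have hc : 0 < c := by simpa using hp 0
      refine ⟨C (Real.sqrt c), 0, ?_⟩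
      rw [← C_pow, Real.sq_sqrt hc.le]
      ring
    · -- p has positive degree, find a complex root
      have hpne : p ≠ 0 := fun h => by simpa [h] using hp 0
      have hdpos : 0 < p.degree := by
        rw [Polynomial.degree_eq_natDegree hpne]
        exact_mod_cast Nat.pos_of_ne_zero h0
      obtain ⟨z, hz⟩ : ∃ z : ℂ, aeval z p = 0 :=
        IsAlgClosed.exists_aeval_eq_zero _ p hdpos.ne'
      have hzim : z.im ≠ 0 := by
        intro him
        have hze : z = (z.re : ℂ) := Complex.ext rfl (by simp [him])
        rw [hze] at hz
        erw [Polynomial.aeval_ofReal, RCLike.ofReal_eq_zero] at hz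
        exact absurd hz (hp z.re).ne'
      obtain ⟨p', hfac⟩ := p.quadratic_dvd_of_aeval_eq_zero_im_ne_zero hz hzim
      set Q : Polynomial ℝ := X ^ 2 - C (2 * z.re) * X + C (‖z‖ ^ 2) with hQ
      have hQsos : Q = (X - C z.re)^2 + (C z.im)^2 := by
        have h2 : ‖z‖ ^ 2 = z.re ^ 2 + z.im ^ 2 := by
          rw [Complex.sq_norm, Complex.normSq_apply]; ring
        rw [hQ, h2]
        simp only [C_add, C_mul, C_pow, map_ofNat]
        ring
      have hQpos : ∀ α : ℝ, 0 < Q.eval α := by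
        intro α
        rw [hQsos]
        simp only [Polynomial.eval_add, Polynomial.eval_pow, Polynomial.eval_sub,
          Polynomial.eval_X, Polynomial.eval_C]
        have h1 : 0 ≤ (α - z.re) ^ 2 := sq_nonneg _
        have h2 : 0 < z.im ^ 2 := by positivity
        linarith
      have hp'pos : ∀ α : ℝ, 0 < p'.eval α := by
        intro α
        have := hp α
        rw [hfac, Polynomial.eval_mul] at this
        nlinarith [hQpos α, sq_nonneg (p'.eval α)]
      have hp'ne : p' ≠ 0 := fun h => by simpa [h] using hp'pos 0
      have hQne : Q ≠ 0 := fun h => by simpa [h] using hQpos 0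
      have hQdeg : Q.natDegree = 2 := by
        rw [hQ]; compute_degree!
      have hlt : p'.natDegree < n := by
        have : p.natDegree = Q.natDegree + p'.natDegree := by
          rw [hfac, Polynomial.natDegree_mul hQne hp'ne]
        omega
      obtain ⟨q, r, hqr⟩ := ih p'.natDegree hlt p' le_rfl hp'pos
      refine ⟨(X - C z.re) * q - C z.im * r, (X - C z.re) * r + C z.im * q, ?_⟩
      rw [hfac, hqr, hQsos]
      ring

theorem stmt_4 (p : Polynomial ℝ) (hp : ∀ α : ℝ, 0 < p.eval α) :
    ∃ q r : Polynomial ℝ, p = q^2 + r^2 :=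
  sos_aux p.natDegree p le_rfl hp
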